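/- For every real number λ > 1 and every finite list of real numbers r₁, …, r_m, there exist a positive real number ξ and a positive constant c (depending only on λ and r₁,…,r_m) such that the distance from ξλʲ − rᵢ to the nearest integer is at least c for every i ∈ {1,…,m} and every integer j ≥ 0. -/

import Mathlib

open Finset
set_option maxHeartbeats 1000000

lemma step_lemma (lam : ℝ) (hlam : 1 < lam) (m : ℕ) (r : Fin m → ℝ)
    (T K : ℕ) (c L : ℝ) (hL : 0 < L) (hc : 0 < c)
    (hK0 : 0 < K) (hKle : (K : ℝ) ≤ lam ^ T)
    (h2c : 2 * c * K ≤ L)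
    (hcount : 2 * m * (L * ((lam ^ T - 1) / (lam - 1)) + (2*c+1) * T) < K)
    (k : ℕ) (a : ℝ) :
    ∃ a', a ≤ a' ∧ a' + L / lam ^ ((k+1)*T) ≤ a + L / lam ^ (k*T) ∧
      ∀ x ∈ Set.Icc a' (a' + L / lam ^ ((k+1)*T)),
        ∀ (i : Fin m) (j : ℕ), j < T → ∀ n : ℤ, c ≤ |lam ^ (k*T + j) * x - r i - n| := by
  have hlam0 : (0:ℝ) < lam := lt_trans one_pos hlam
  have hpow : ∀ N : ℕ, (0:ℝ) < lam ^ N := fun N => pow_pos hlam0 N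
  have hK0R : (0:ℝ) < K := by exact_mod_cast hK0
  set G : ℝ := L / lam ^ (k*T) with hGdef
  have hG : 0 < G := div_pos hL (hpow _)
  set h : ℝ := G / K with hhdef
  have hh : 0 < h := div_pos hG hK0R
  set b : ℝ := a + G with hbdef
  have hsmall : L / lam ^ ((k+1)*T) ≤ h := by
    have h1 : L / lam ^ ((k+1)*T) = G / lam ^ T := by
      rw [hGdef, add_mul, one_mul, pow_add, div_div]
    rw [h1, hhdef]
    exact div_le_div_of_nonneg_left hG.le hK0R hKle
  have hJpow : ∀ j, lam ^ (k*T) ≤ lam ^ (k*T + j) :=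
    fun j => pow_le_pow_right₀ hlam.le (Nat.le_add_right _ _)
  set lo : Fin m → ℕ → ℤ := fun i j => ⌈lam ^ (k*T + j) * a - r i - c⌉ with hlodef
  set hi : Fin m → ℕ → ℤ := fun i j => ⌊lam ^ (k*T + j) * b - r i + c⌋ with hhidef
  set s : Fin m → ℕ → ℤ → ℤ := fun i j n => ⌈((r i + n) / lam ^ (k*T + j) - a) / h - 3/2⌉ with hsdef
  set Bad : Finset ℤ := (univ ×ˢ range T).biUnion
      (fun p => (Finset.Icc (lo p.1 p.2) (hi p.1 p.2)).biUnion
        (fun n => {s p.1 p.2 n, s p.1 p.2 n + 1})) with hBaddef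
  -- cardinality bound
  have hIcc : ∀ (i : Fin m) (j : ℕ), ((Finset.Icc (lo i j) (hi i j)).card : ℝ)
      ≤ L * lam ^ j + (2*c + 1) := by
    intro i j
    have hbound : (0:ℝ) ≤ L * lam ^ j + (2*c+1) := by
      nlinarith [hL.le, hc.le, (hpow j).le]
    rw [Int.card_Icc]
    rcases le_or_gt (lo i j) (hi i j) with hle | hlt
    · have hcast : (((hi i j + 1 - lo i j).toNat : ℤ) : ℝ) = ((hi i j : ℝ) + 1 - lo i j) := by
        rw [Int.toNat_of_nonneg (by omega)]; push_cast; ring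
      have hflo : (lam ^ (k*T+j) * a - r i - c) ≤ (lo i j : ℝ) := by
        simp only [hlodef]; exact Int.le_ceil _
      have hfhi : (hi i j : ℝ) ≤ lam ^ (k*T+j) * b - r i + c := by
        simp only [hhidef]; exact Int.floor_le _
      have hGL : lam ^ (k*T+j) * G = L * lam ^ j := by
        rw [hGdef, pow_add]; field_simp
      have hexp : lam ^ (k*T+j) * b - lam ^ (k*T+j) * a = L * lam ^ j := by
        rw [hbdef]; rw [← hGL]; ring
      have : ((hi i j : ℝ) + 1 - lo i j) ≤ L * lam ^ j + (2*c+1) := by nlinarith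
      calc (((hi i j + 1 - lo i j).toNat : ℕ) : ℝ) = ((hi i j : ℝ) + 1 - lo i j) := by
            exact_mod_cast hcast
        _ ≤ _ := this
    · have hz : (hi i j + 1 - lo i j).toNat = 0 := by omega
      rw [hz]; exact_mod_cast hbound
  have hcardN : Bad.card ≤ ∑ p ∈ (univ : Finset (Fin m)) ×ˢ range T, 2 * (Finset.Icc (lo p.1 p.2) (hi p.1 p.2)).card := by
    refine Finset.card_biUnion_le.trans (Finset.sum_le_sum fun p _ => ?_)
    refine Finset.card_biUnion_le.trans ?_
    calc ∑ n ∈ Finset.Icc (lo p.1 p.2) (hi p.1 p.2), ({s p.1 p.2 n, s p.1 p.2 n + 1} : Finset ℤ).card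
        ≤ ∑ n ∈ Finset.Icc (lo p.1 p.2) (hi p.1 p.2), 2 := by
          refine Finset.sum_le_sum fun n _ => ?_
          exact (Finset.card_insert_le _ _).trans (by simp)
      _ = 2 * (Finset.Icc (lo p.1 p.2) (hi p.1 p.2)).card := by
          rw [Finset.sum_const, smul_eq_mul, mul_comm]
  have hcard : (Bad.card : ℝ) < K := by
    have h1 : (Bad.card : ℝ) ≤ ∑ p ∈ (univ : Finset (Fin m)) ×ˢ range T, 2 * (L * lam ^ p.2 + (2*c+1)) := by
      calc (Bad.card : ℝ)
          ≤ ((∑ p ∈ (univ : Finset (Fin m)) ×ˢ range T, 2 * (Finset.Icc (lo p.1 p.2) (hi p.1 p.2)).card : ℕ) : ℝ) := by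
            exact_mod_cast hcardN
        _ ≤ ∑ p ∈ (univ : Finset (Fin m)) ×ˢ range T, 2 * (L * lam ^ p.2 + (2*c+1)) := by
            push_cast
            refine Finset.sum_le_sum fun p _ => ?_
            have := hIcc p.1 p.2
            linarith
    have h2 : ∑ p ∈ (univ : Finset (Fin m)) ×ˢ range T, 2 * (L * lam ^ p.2 + (2*c+1))
        = m * ∑ j ∈ range T, 2 * (L * lam ^ j + (2*c+1)) := by
      rw [Finset.sum_product]
      have he : ∀ x : Fin m, ∑ y ∈ range T, 2 * (L * lam ^ ((x,y).2) + (2*c+1))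
          = ∑ j ∈ range T, 2 * (L * lam ^ j + (2*c+1)) := fun x => rfl
      rw [Finset.sum_congr rfl (fun x _ => he x), Finset.sum_const, nsmul_eq_mul,
        Finset.card_univ, Fintype.card_fin]
    have h3 : ∑ j ∈ range T, 2 * (L * lam ^ j + (2*c+1))
        = 2 * L * ((lam ^ T - 1)/(lam - 1)) + 2 * (2*c+1) * T := by
      have : ∀ j ∈ range T, 2 * (L * lam ^ j + (2*c+1)) = 2 * L * lam ^ j + 2*(2*c+1) := by
        intro j _; ring
      rw [Finset.sum_congr rfl this, Finset.sum_add_distrib, ← Finset.mul_sum,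
        geom_sum_eq hlam.ne', Finset.sum_const, Finset.card_range, nsmul_eq_mul]
      ring
    have : (Bad.card : ℝ) ≤ 2 * m * (L * ((lam ^ T - 1)/(lam - 1)) + (2*c+1) * T) := by
      rw [h2, h3] at h1; nlinarith [h1]
    linarith
  -- find a good candidate index q
  have hq : ∃ q ∈ range K, (q:ℤ) ∉ Bad := by
    by_contra hcon
    push_neg at hcon
    have hsub : (range K).image (fun q : ℕ => (q:ℤ)) ⊆ Bad := by
      intro z hz
      obtain ⟨q, hq1, rfl⟩ := Finset.mem_image.mp hz
      exact hcon q hq1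
    have hinj : Function.Injective (fun q : ℕ => (q:ℤ)) := fun a b hab => by simpa using hab
    have hKB := Finset.card_le_card hsub
    rw [Finset.card_image_of_injective _ hinj, Finset.card_range] at hKB
    have : (K:ℝ) ≤ Bad.card := by exact_mod_cast hKB
    linarith
  obtain ⟨q, hqK, hqBad⟩ := hq
  have hq1K : (q:ℝ) + 1 ≤ K := by exact_mod_cast Finset.mem_range.mp hqK
  have hKh : (K:ℝ) * h = G := by rw [hhdef]; field_simp [hK0R.ne']
  refine ⟨a + q * h, ?_, ?_, ?_⟩
  · nlinarith [hh, (Nat.cast_nonneg q : (0:ℝ) ≤ q)]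
  · nlinarith [hsmall, hh]
  · intro x hx i j hj n
    by_contra hlt
    push_neg at hlt
    have hx1 : a + q * h ≤ x := hx.1
    have hx2 : x ≤ a + q * h + h := le_trans hx.2 (by linarith [hsmall])
    have hxa : a ≤ x := by nlinarith [(Nat.cast_nonneg q : (0:ℝ) ≤ q), hh]
    have hxb : x ≤ b := by rw [hbdef]; nlinarith
    have habs := abs_lt.mp hlt
    have hmem : n ∈ Finset.Icc (lo i j) (hi i j) := by
      rw [Finset.mem_Icc]
      constructor
      · show (⌈lam ^ (k*T + j) * a - r i - c⌉ : ℤ) ≤ n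
        apply Int.ceil_le.mpr
        have : lam ^ (k*T+j) * a ≤ lam ^ (k*T+j) * x := mul_le_mul_of_nonneg_left hxa (hpow (k*T+j)).le
        push_cast
        linarith [habs.1]
      · show n ≤ (⌊lam ^ (k*T + j) * b - r i + c⌋ : ℤ)
        apply Int.le_floor.mpr
        have : lam ^ (k*T+j) * x ≤ lam ^ (k*T+j) * b := mul_le_mul_of_nonneg_left hxb (hpow (k*T+j)).le
        push_cast
        linarith [habs.2]
    set p : ℝ := (r i + n) / lam ^ (k*T+j) with hpdef
    have hkey : lam ^ (k*T+j) * (x - p) = lam ^ (k*T+j) * x - r i - n := by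
      rw [hpdef]; field_simp; ring
    have hxp : |x - p| < c / lam ^ (k*T+j) := by
      rw [lt_div_iff₀ (hpow (k*T+j)), mul_comm]
      calc lam ^ (k*T+j) * |x - p| = |lam ^ (k*T+j) * (x - p)| := by
            rw [abs_mul, abs_of_pos (hpow (k*T+j))]
        _ = |lam ^ (k*T+j) * x - r i - n| := by rw [hkey]
        _ < c := hlt
    have hch : c / lam ^ (k*T+j) ≤ h / 2 := by
      have h1 : c ≤ L / (2*K) := by
        rw [le_div_iff₀ (by positivity)]; nlinarith
      have h2 : c / lam ^ (k*T+j) ≤ c / lam ^ (k*T) :=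
        div_le_div_of_nonneg_left hc.le (hpow _) (hJpow j)
      have h3 : h / 2 = (L / (2*K)) / lam ^ (k*T) := by
        rw [hhdef, hGdef]; field_simp
      rw [h3]
      exact h2.trans ((div_le_div_iff_of_pos_right (hpow _)).mpr h1)
    have hpp := abs_lt.mp (lt_of_lt_of_le hxp hch)
    set u : ℝ := (p - a) / h with hudef
    have hu1 : u - 3/2 < q := by
      have hpa : p - a < (↑q + 3/2) * h := by nlinarith
      have : u < ↑q + 3/2 := by rw [hudef, div_lt_iff₀ hh]; exact hpa
      linarith
    have hu2 : (q:ℝ) < u + 1/2 := by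
      have hpa : (↑q - 1/2) * h < p - a := by nlinarith
      have : (↑q:ℝ) - 1/2 < u := by rw [hudef, lt_div_iff₀ hh]; exact hpa
      linarith
    have hs1 : s i j n ≤ (q:ℤ) := by
      show (⌈((r i + n) / lam ^ (k*T + j) - a) / h - 3/2⌉ : ℤ) ≤ (q:ℤ)
      apply Int.ceil_le.mpr
      push_cast
      rw [← hpdef, ← hudef]
      linarith
    have hs2 : (q:ℤ) ≤ s i j n + 1 := by
      have hceil : u - 3/2 ≤ ((s i j n : ℤ) : ℝ) := by
        show u - 3/2 ≤ ((⌈((r i + n) / lam ^ (k*T + j) - a) / h - 3/2⌉ : ℤ) : ℝ)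
        rw [← hpdef, ← hudef]
        exact Int.le_ceil _
      have : (q:ℝ) < ((s i j n : ℤ):ℝ) + 2 := by linarith
      have : (q:ℤ) < s i j n + 2 := by exact_mod_cast this
      omega
    apply hqBad
    rw [hBaddef]
    apply Finset.mem_biUnion.mpr
    refine ⟨(i, j), Finset.mem_product.mpr ⟨Finset.mem_univ _, Finset.mem_range.mpr hj⟩, ?_⟩
    apply Finset.mem_biUnion.mpr
    refine ⟨n, hmem, ?_⟩
    simp only [Finset.mem_insert, Finset.mem_singleton]
    omega

lemma exists_T (lam : ℝ) (hlam : 1 < lam) (m : ℕ) :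
    ∃ T : ℕ, 0 < T ∧ 8 * (m:ℝ) * T + 4 ≤ lam ^ T := by
  set d : ℝ := lam - 1 with hd
  have hd0 : 0 < d := by rw [hd]; linarith
  obtain ⟨t0, ht0⟩ := exists_nat_ge ((16*(m:ℝ)+4)/d^2)
  set t : ℕ := t0 + 1 with ht
  have ht1 : (1:ℝ) ≤ t := by exact_mod_cast Nat.one_le_iff_ne_zero.mpr (by omega)
  have htd : (16*(m:ℝ)+4) ≤ t * d^2 := by
    have h1 : ((16*(m:ℝ)+4)/d^2) ≤ t := by
      have : (t0:ℝ) ≤ t := by exact_mod_cast Nat.le_succ t0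
      linarith
    calc (16*(m:ℝ)+4) = ((16*(m:ℝ)+4)/d^2) * d^2 := by field_simp
      _ ≤ t * d^2 := by nlinarith [sq_nonneg d]
  clear_value t
  refine ⟨2*t, by omega, ?_⟩
  have hpt : (1:ℝ) + t * d ≤ lam ^ t := by
    have := one_add_mul_le_pow (by linarith : (-2:ℝ) ≤ d) t
    calc (1:ℝ) + t * d = 1 + t • d := by rw [nsmul_eq_mul]
      _ ≤ (1+d)^t := by
          have h := one_add_mul_le_pow (by linarith : (-2:ℝ) ≤ d) t
          calc (1:ℝ) + t • d = 1 + t * d := by rw [nsmul_eq_mul]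
            _ ≤ (1+d)^t := one_add_mul_le_pow (by linarith : (-2:ℝ) ≤ d) t
      _ = lam ^ t := by rw [hd]; ring_nf
  have hpow2 : lam ^ (2*t) = (lam ^ t)^2 := by rw [← pow_mul, mul_comm]
  rw [hpow2]
  have hlt0 : (0:ℝ) < 1 + t*d := by nlinarith
  have hsq : (1 + (t:ℝ)*d)^2 ≤ (lam ^ t)^2 := by nlinarith
  have hexpand : (1 + (t:ℝ)*d)^2 ≥ 1 + 2*t*d + (t:ℝ)^2*d^2 := by nlinarith [sq_nonneg ((t:ℝ)*d)]
  have hfin : 16*(m:ℝ)*t + 4 ≤ (t:ℝ)^2 * d^2 := by nlinarith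
  push_cast
  nlinarith [hsq, hexpand, hfin, mul_nonneg (by positivity : (0:ℝ) <= (t:ℝ)) hd0.le]


/-- Powers of λ modulo 1 avoid a finite set of targets: there exist ξ > 0 and c > 0
with ‖ξλʲ − rᵢ‖_ℤ ≥ c for all i, j. -/
theorem stmt0 (lam : ℝ) (hlam : 1 < lam) (m : ℕ) (r : Fin m → ℝ) :
    ∃ ξ : ℝ, 0 < ξ ∧ ∃ c : ℝ, 0 < c ∧
      ∀ (i : Fin m) (j : ℕ) (n : ℤ), c ≤ |ξ * lam ^ j - r i - n| := by
  have hlam0 : (0:ℝ) < lam := lt_trans one_pos hlam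
  obtain ⟨T, hT0, hT⟩ := exists_T lam hlam m
  have hpowT : (0:ℝ) < lam ^ T := pow_pos hlam0 T
  have h4 : (4:ℝ) ≤ lam ^ T := by nlinarith [(Nat.cast_nonneg m : (0:ℝ) ≤ m), (Nat.cast_nonneg T : (0:ℝ) ≤ T)]
  set K : ℕ := ⌊lam ^ T⌋₊ with hKdef
  have hK0 : 0 < K := by
    rw [hKdef]
    exact Nat.floor_pos.mpr (by linarith)
  have hK0R : (0:ℝ) < K := by exact_mod_cast hK0
  have hKle : (K:ℝ) ≤ lam ^ T := Nat.floor_le (by positivity)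
  have hKgt : lam ^ T - 1 < K := by
    have := Nat.lt_floor_add_one (lam ^ T)
    rw [hKdef]; linarith
  set L : ℝ := min ((lam - 1)/(4*(m+1))) (1/2) with hLdef
  have hL : 0 < L := by
    rw [hLdef]
    apply lt_min
    · apply div_pos (by linarith) (by positivity)
    · norm_num
  have hLhalf : L ≤ 1/2 := min_le_right _ _
  have hLm : L ≤ (lam - 1)/(4*(m+1)) := min_le_left _ _
  set c : ℝ := L / (4*K) with hcdef
  have hc : 0 < c := by rw [hcdef]; positivity
  have h2c : 2 * c * K ≤ L := by
    rw [hcdef]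
    have e : 2 * (L / (4*(K:ℝ))) * K = L/2 := by
      field_simp
      ring
    rw [e]; linarith
  have hcount : 2 * m * (L * ((lam ^ T - 1) / (lam - 1)) + (2*c+1) * T) < K := by
    have hXnn : (0:ℝ) ≤ (lam ^ T - 1)/(lam - 1) := by
      apply div_nonneg (by nlinarith) (by linarith)
    have hf1 : L * ((lam ^ T - 1)/(lam - 1)) ≤ (lam ^ T - 1)/(4*(m+1)) := by
      calc L * ((lam ^ T - 1)/(lam - 1)) ≤ ((lam - 1)/(4*(m+1))) * ((lam ^ T - 1)/(lam - 1)) :=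
            mul_le_mul_of_nonneg_right hLm hXnn
        _ = (lam ^ T - 1)/(4*(m+1)) := by
            have hne : (lam - 1) ≠ 0 := ne_of_gt (by linarith)
            field_simp
    have hf2 : 2 * (m:ℝ) * ((lam ^ T - 1)/(4*(m+1))) ≤ (lam ^ T - 1)/2 := by
      have e : 2*(m:ℝ)*((lam^T-1)/(4*(m+1))) = (lam^T-1) * (2*m/(4*(m+1))) := by ring
      have hr : 2*(m:ℝ)/(4*(m+1)) ≤ 1/2 := by
        rw [div_le_div_iff₀ (by positivity) (by norm_num)]
        nlinarith [(Nat.cast_nonneg m : (0:ℝ) ≤ m)]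
      rw [e]
      calc (lam^T-1) * (2*(m:ℝ)/(4*(m+1))) ≤ (lam^T-1) * (1/2) :=
            mul_le_mul_of_nonneg_left hr (by linarith)
        _ = (lam^T-1)/2 := by ring
    have hcle : c ≤ 1/8 := by
      rw [hcdef]
      have : (4:ℝ) ≤ 4*K := by nlinarith
      calc L / (4*K) ≤ (1/2) / 4 :=
            div_le_div₀ (by norm_num) hLhalf (by norm_num) this
        _ = 1/8 := by norm_num
    have hmT : (0:ℝ) ≤ (m:ℝ) * T := by positivity
    have hterm2 : 2 * (m:ℝ) * ((2*c+1) * T) ≤ 3 * ((m:ℝ)*T) := by nlinarith [hc.le, (Nat.cast_nonneg T : (0:ℝ) ≤ T), (Nat.cast_nonneg m : (0:ℝ) ≤ m)]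
    have hmain : (lam ^ T - 1)/2 + 3*((m:ℝ)*T) ≤ lam ^ T - 1 := by nlinarith
    nlinarith [mul_le_mul_of_nonneg_left hf1 (by positivity : (0:ℝ) ≤ 2*(m:ℝ))]
  -- build the sequence
  have step := step_lemma lam hlam m r T K c L hL hc hK0 hKle h2c hcount
  choose f hf1 hf2 hf3 using step
  set A : ℕ → ℝ := fun n => Nat.rec (1:ℝ) (fun k ak => f k ak) n with hAdef
  have hAsucc : ∀ k, A (k+1) = f k (A k) := fun k => rfl
  set B : ℕ → ℝ := fun n => A n + L / lam ^ (n*T) with hBdef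
  have hmono : Monotone A := monotone_nat_of_le_succ (fun k => by rw [hAsucc]; exact hf1 k (A k))
  have hBanti : Antitone B := antitone_nat_of_succ_le (fun k => by
    show A (k+1) + L / lam ^ ((k+1)*T) ≤ A k + L / lam ^ (k*T)
    rw [hAsucc]; exact hf2 k (A k))
  have hAB : ∀ k, A k ≤ B k := fun k => by
    show A k ≤ A k + L / lam ^ (k*T)
    have : (0:ℝ) < L / lam ^ (k*T) := by positivity
    linarith
  have hbdd : BddAbove (Set.range A) := by
    refine ⟨B 0, ?_⟩
    rintro _ ⟨k, rfl⟩
    calc A k ≤ B k := hAB k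
      _ ≤ B 0 := hBanti (Nat.zero_le k)
  set ξ : ℝ := ⨆ k, A k with hxidef
  have hξge : ∀ k, A k ≤ ξ := fun k => le_ciSup hbdd k
  have hξle : ∀ k, ξ ≤ B k := fun k => by
    apply ciSup_le
    intro k'
    rcases le_total k' k with hle | hle
    · exact (hmono hle).trans (hAB k)
    · exact (hAB k').trans (hBanti hle)
  have hA0 : A 0 = 1 := rfl
  refine ⟨ξ, by have := hξge 0; rw [hA0] at this; linarith, c, hc, ?_⟩
  intro i j n
  set k : ℕ := j / T with hkdef
  have hmem : ξ ∈ Set.Icc (f k (A k)) (f k (A k) + L / lam ^ ((k+1)*T)) := by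
    constructor
    · rw [← hAsucc]; exact hξge (k+1)
    · have := hξle (k+1)
      rw [hBdef] at this
      rw [← hAsucc]
      exact this
  have hjmod : j % T < T := Nat.mod_lt j hT0
  have := hf3 k (A k) ξ hmem i (j % T) hjmod n
  have hexp : k * T + j % T = j := by
    rw [hkdef, mul_comm]
    exact Nat.div_add_mod j T
  rw [hexp] at this
  calc c ≤ |lam ^ j * ξ - r i - n| := this
    _ = |ξ * lam ^ j - r i - n| := by rw [mul_comm]
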